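/- For 0 < h ≤ 1 and A a bounded self-adjoint operator with A ≥ I on a complex Hilbert space, the generating function φ(f) = exp(−(1/(4h))⟨f, Af⟩) satisfies the σ-positivity condition with respect to σ(f,g) = Im⟨f,g⟩; i.e., all matrices [e^{−(i/2)Im⟨f_j,f_k⟩} e^{−(1/(4h))⟨f_j−f_k, A(f_j−f_k)⟩}]_{j,k} are positive semidefinite. -/

import Mathlib

open scoped InnerProductSpace ComplexOrder

noncomputable section

lemma gram_pow_nonneg {n N : ℕ} (B : Matrix (Fin N) (Fin n) ℂ) (p : ℕ) (x : Fin n → ℂ) :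
    0 ≤ ∑ j : Fin n, ∑ k : Fin n,
        (starRingEnd ℂ) (x j) * x k * (∑ m : Fin N, (starRingEnd ℂ) (B m j) * B m k) ^ p := by
  have expand : ∀ j k : Fin n,
      (starRingEnd ℂ) (x j) * x k * (∑ m : Fin N, (starRingEnd ℂ) (B m j) * B m k) ^ p
        = ∑ t : Fin p → Fin N,
            (starRingEnd ℂ) (x j * ∏ i, B (t i) j) * (x k * ∏ i, B (t i) k) := by
    intro j k
    rw [Fintype.sum_pow, Finset.mul_sum]
    refine Finset.sum_congr rfl fun t _ => ?_
    rw [Finset.prod_mul_distrib, map_mul, map_prod]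
    ring
  calc ∑ j : Fin n, ∑ k : Fin n,
        (starRingEnd ℂ) (x j) * x k * (∑ m : Fin N, (starRingEnd ℂ) (B m j) * B m k) ^ p
      = ∑ j : Fin n, ∑ t : Fin p → Fin N, ∑ k : Fin n,
          (starRingEnd ℂ) (x j * ∏ i, B (t i) j) * (x k * ∏ i, B (t i) k) := by
        refine Finset.sum_congr rfl fun j _ => ?_
        rw [← Finset.sum_comm]
        exact Finset.sum_congr rfl fun k _ => expand j k
    _ = ∑ t : Fin p → Fin N, ∑ j : Fin n, ∑ k : Fin n,
          (starRingEnd ℂ) (x j * ∏ i, B (t i) j) * (x k * ∏ i, B (t i) k) := Finset.sum_comm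
    _ = ∑ t : Fin p → Fin N,
          (starRingEnd ℂ) (∑ j, x j * ∏ i, B (t i) j) * (∑ k, x k * ∏ i, B (t i) k) := by
        refine Finset.sum_congr rfl fun t _ => ?_
        rw [map_sum, Finset.sum_mul_sum]
    _ ≥ 0 := Finset.sum_nonneg fun t _ => star_mul_self_nonneg _

section
variable {H : Type*} [NormedAddCommGroup H] [InnerProductSpace ℂ H] [CompleteSpace H]

omit [CompleteSpace H] in
lemma inner_expand {n : ℕ} (T : H →L[ℂ] H) (f : Fin n → H) (y z : Fin n → ℂ) :
    ⟪∑ j, y j • f j, T (∑ k, z k • f k)⟫_ℂ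
      = ∑ j, ∑ k, (starRingEnd ℂ) (y j) * z k * ⟪f j, T (f k)⟫_ℂ := by
  rw [map_sum, sum_inner]
  refine Finset.sum_congr rfl fun j _ => ?_
  rw [inner_smul_left, inner_sum, Finset.mul_sum]
  refine Finset.sum_congr rfl fun k _ => ?_
  rw [map_smul, inner_smul_right]
  ring

lemma selfadj_conj (A : H →L[ℂ] H) (hA : IsSelfAdjoint A) (u v : H) :
    (starRingEnd ℂ) ⟪v, A u⟫_ℂ = ⟪u, A v⟫_ℂ := by
  rw [inner_conj_symm]; exact hA.isSymmetric u v

end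

section
variable {H : Type*} [NormedAddCommGroup H] [InnerProductSpace ℂ H] [CompleteSpace H]

lemma vec_pos1 (A : H →L[ℂ] H) (hA : IsSelfAdjoint A)
    (hge : ∀ f : H, ‖f‖ ^ 2 ≤ (⟪f, A f⟫_ℂ).re) {c : ℝ} (hc : (1:ℝ)/4 ≤ c) (g : H) :
    0 ≤ (c : ℂ) * ⟪g, A g⟫_ℂ - (1/4 : ℂ) * ⟪g, g⟫_ℂ := by
  have him : (⟪g, A g⟫_ℂ).im = 0 := Complex.conj_eq_iff_im.mp (selfadj_conj A hA g g)
  have hgg : ⟪g, g⟫_ℂ = ((‖g‖ ^ 2 : ℝ) : ℂ) := by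
    rw [inner_self_eq_norm_sq_to_K]; norm_cast
  rw [Complex.le_def]
  constructor
  · simp only [Complex.sub_re, Complex.mul_re, Complex.ofReal_re, Complex.ofReal_im,
      Complex.zero_re, hgg, him]
    have h1 := hge g
    have h2 : (0:ℝ) ≤ ‖g‖ ^ 2 := sq_nonneg _
    norm_num
    nlinarith
  · simp only [Complex.sub_im, Complex.mul_im, Complex.ofReal_re, Complex.ofReal_im, him, hgg,
      Complex.zero_im]
    norm_num

lemma vec_pos2 (A : H →L[ℂ] H) (hA : IsSelfAdjoint A)
    (hge : ∀ f : H, ‖f‖ ^ 2 ≤ (⟪f, A f⟫_ℂ).re) {c : ℝ} (hc : (1:ℝ)/4 ≤ c) (g : H) :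
    0 ≤ (c : ℂ) * ⟪g, A g⟫_ℂ + (1/4 : ℂ) * ⟪g, g⟫_ℂ := by
  have him : (⟪g, A g⟫_ℂ).im = 0 := Complex.conj_eq_iff_im.mp (selfadj_conj A hA g g)
  have hgg : ⟪g, g⟫_ℂ = ((‖g‖ ^ 2 : ℝ) : ℂ) := by
    rw [inner_self_eq_norm_sq_to_K]; norm_cast
  rw [Complex.le_def]
  constructor
  · simp only [Complex.add_re, Complex.mul_re, Complex.ofReal_re, Complex.ofReal_im,
      Complex.zero_re, hgg, him]
    have h1 := hge g
    have h2 : (0:ℝ) ≤ ‖g‖ ^ 2 := sq_nonneg _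
    norm_num
    nlinarith
  · simp only [Complex.add_im, Complex.mul_im, Complex.ofReal_re, Complex.ofReal_im, him, hgg,
      Complex.zero_im]
    norm_num

end

section
variable {H : Type*} [NormedAddCommGroup H] [InnerProductSpace ℂ H] [CompleteSpace H]

lemma kernel_form_nonneg (A : H →L[ℂ] H) (hA : IsSelfAdjoint A)
    (hge : ∀ f : H, ‖f‖ ^ 2 ≤ (⟪f, A f⟫_ℂ).re) {c : ℝ} (hc : (1:ℝ)/4 ≤ c)
    {n : ℕ} (f : Fin n → H) (x : Fin n → ℂ) :
    0 ≤ ∑ j, ∑ k, (starRingEnd ℂ) (x j) * x k *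
        ((c : ℂ) * (⟪f j, A (f k)⟫_ℂ + ⟪f k, A (f j)⟫_ℂ)
          - (1/4 : ℂ) * ⟪f j, f k⟫_ℂ + (1/4 : ℂ) * ⟪f k, f j⟫_ℂ) := by
  set w : H := ∑ j, x j • f j with hwdef
  set u : H := ∑ j, (starRingEnd ℂ) (x j) • f j with hudef
  have hw : ∑ j, ∑ k, (starRingEnd ℂ) (x j) * x k * ⟪f j, A (f k)⟫_ℂ = ⟪w, A w⟫_ℂ :=
    (inner_expand A f x x).symm
  have hw2 : ∑ j, ∑ k, (starRingEnd ℂ) (x j) * x k * ⟪f j, f k⟫_ℂ = ⟪w, w⟫_ℂ := by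
    have := (inner_expand (1 : H →L[ℂ] H) f x x).symm
    simpa using this
  have hu : ∑ j, ∑ k, (starRingEnd ℂ) (x j) * x k * ⟪f k, A (f j)⟫_ℂ = ⟪u, A u⟫_ℂ := by
    rw [Finset.sum_comm, inner_expand A f (fun j => (starRingEnd ℂ) (x j))
      (fun j => (starRingEnd ℂ) (x j))]
    refine Finset.sum_congr rfl fun j _ => Finset.sum_congr rfl fun k _ => ?_
    simp only [Complex.conj_conj]
    ring
  have hu2 : ∑ j, ∑ k, (starRingEnd ℂ) (x j) * x k * ⟪f k, f j⟫_ℂ = ⟪u, u⟫_ℂ := by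
    rw [Finset.sum_comm]
    have := inner_expand (1 : H →L[ℂ] H) f (fun j => (starRingEnd ℂ) (x j))
      (fun j => (starRingEnd ℂ) (x j))
    simp only [ContinuousLinearMap.one_apply] at this
    rw [this]
    refine Finset.sum_congr rfl fun j _ => Finset.sum_congr rfl fun k _ => ?_
    simp only [Complex.conj_conj]
    ring
  have split : ∑ j, ∑ k, (starRingEnd ℂ) (x j) * x k *
        ((c : ℂ) * (⟪f j, A (f k)⟫_ℂ + ⟪f k, A (f j)⟫_ℂ)
          - (1/4 : ℂ) * ⟪f j, f k⟫_ℂ + (1/4 : ℂ) * ⟪f k, f j⟫_ℂ)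
      = ((c : ℂ) * ⟪w, A w⟫_ℂ - (1/4 : ℂ) * ⟪w, w⟫_ℂ)
        + ((c : ℂ) * ⟪u, A u⟫_ℂ + (1/4 : ℂ) * ⟪u, u⟫_ℂ) := by
    rw [← hw, ← hw2, ← hu, ← hu2]
    simp only [Finset.mul_sum, ← Finset.sum_add_distrib, ← Finset.sum_sub_distrib]
    refine Finset.sum_congr rfl fun j _ => Finset.sum_congr rfl fun k _ => ?_
    ring
  rw [split]
  exact add_nonneg (vec_pos1 A hA hge hc w) (vec_pos2 A hA hge hc u)

end

section
variable {H : Type*} [NormedAddCommGroup H] [InnerProductSpace ℂ H] [CompleteSpace H]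

lemma kernel_pow_form_nonneg (A : H →L[ℂ] H) (hA : IsSelfAdjoint A)
    (hge : ∀ f : H, ‖f‖ ^ 2 ≤ (⟪f, A f⟫_ℂ).re) {c : ℝ} (hc : (1:ℝ)/4 ≤ c)
    {n : ℕ} (f : Fin n → H) (p : ℕ) (x : Fin n → ℂ) :
    0 ≤ ∑ j, ∑ k, (starRingEnd ℂ) (x j) * x k *
        ((c : ℂ) * (⟪f j, A (f k)⟫_ℂ + ⟪f k, A (f j)⟫_ℂ)
          - (1/4 : ℂ) * ⟪f j, f k⟫_ℂ + (1/4 : ℂ) * ⟪f k, f j⟫_ℂ) ^ p := by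
  set M : Matrix (Fin n) (Fin n) ℂ := Matrix.of (fun j k =>
    (c : ℂ) * (⟪f j, A (f k)⟫_ℂ + ⟪f k, A (f j)⟫_ℂ)
      - (1/4 : ℂ) * ⟪f j, f k⟫_ℂ + (1/4 : ℂ) * ⟪f k, f j⟫_ℂ) with hMdef
  have hMpsd : M.PosSemidef := by
    rw [Matrix.posSemidef_iff_dotProduct_mulVec]
    constructor
    · ext j k
      simp only [Matrix.conjTranspose_apply, hMdef, Matrix.of_apply, RCLike.star_def]
      simp only [map_add, map_sub, map_mul, Complex.conj_ofReal, map_div₀, map_one,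
        map_ofNat, inner_conj_symm, selfadj_conj A hA]
    · intro y
      have hpos := kernel_form_nonneg A hA hge hc f y
      have : dotProduct (star y) (M.mulVec y)
          = ∑ j, ∑ k, (starRingEnd ℂ) (y j) * y k *
              ((c : ℂ) * (⟪f j, A (f k)⟫_ℂ + ⟪f k, A (f j)⟫_ℂ)
                - (1/4 : ℂ) * ⟪f j, f k⟫_ℂ + (1/4 : ℂ) * ⟪f k, f j⟫_ℂ) := by
        simp only [dotProduct, Matrix.mulVec, Pi.star_apply, hMdef, Matrix.of_apply,
          Finset.mul_sum, dotProduct, RCLike.star_def]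
        refine Finset.sum_congr rfl fun j _ => Finset.sum_congr rfl fun k _ => ?_
        ring
      rw [this]
      exact hpos
  open scoped MatrixOrder in
  obtain ⟨B, hB⟩ := CStarAlgebra.nonneg_iff_eq_star_mul_self.mp hMpsd.nonneg
  have hentry : ∀ j k, (c : ℂ) * (⟪f j, A (f k)⟫_ℂ + ⟪f k, A (f j)⟫_ℂ)
      - (1/4 : ℂ) * ⟪f j, f k⟫_ℂ + (1/4 : ℂ) * ⟪f k, f j⟫_ℂ
      = ∑ m, (starRingEnd ℂ) (B m j) * B m k := by
    intro j k
    have := congrFun (congrFun hB j) k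
    simpa [hMdef, Matrix.mul_apply, Matrix.star_eq_conjTranspose, Matrix.conjTranspose_apply, RCLike.star_def] using this
  simp only [hentry]
  exact gram_pow_nonneg B p x

end


/-- for `0 < h ≤ 1` and `A` bounded self-adjoint with `A ≥ I` on a
complex Hilbert space, the generating function `φ(f) = exp(-(1/(4h))⟪f, A f⟫)` is
`σ`-positive for `σ(f,g) = Im⟪f,g⟫`: all the matrices
`[exp(-(i/2) Im⟪f_j,f_k⟫) exp(-(1/(4h))⟪f_j-f_k, A(f_j-f_k)⟫)]` are positive
semidefinite. -/
theorem rescaled_quasifree_generating_function_sigma_positive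
    {H : Type*} [NormedAddCommGroup H] [InnerProductSpace ℂ H] [CompleteSpace H]
    (A : H →L[ℂ] H) (hA : IsSelfAdjoint A)
    (hge : ∀ f : H, ‖f‖ ^ 2 ≤ (⟪f, A f⟫_ℂ).re)
    (h : ℝ) (hh0 : 0 < h) (hh1 : h ≤ 1) :
    ∀ (n : ℕ) (a : Fin n → ℂ) (f : Fin n → H),
      0 ≤ ∑ j : Fin n, ∑ k : Fin n,
        a j * (starRingEnd ℂ) (a k) *
          Complex.exp (-(Complex.I / 2) * ((⟪f j, f k⟫_ℂ).im : ℂ)) *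
          (Real.exp (-(1 / (4 * h)) * (⟪f j - f k, A (f j - f k)⟫_ℂ).re) : ℂ) := by
  intro n a f
  set c : ℝ := 1 / (4 * h) with hcdef
  have hc4 : (1:ℝ)/4 ≤ c := by
    rw [hcdef]
    have h4 : (0:ℝ) < 4 * h := by linarith
    have h44 : 4 * h ≤ 4 := by linarith
    calc (1:ℝ)/4 ≤ 1/(4*h) := one_div_le_one_div_of_le h4 h44
      _ = 1/(4*h) := rfl
  set K : Fin n → Fin n → ℂ := fun j k =>
    (c : ℂ) * (⟪f j, A (f k)⟫_ℂ + ⟪f k, A (f j)⟫_ℂ)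
      - (1/4 : ℂ) * ⟪f j, f k⟫_ℂ + (1/4 : ℂ) * ⟪f k, f j⟫_ℂ with hKdef
  set b : Fin n → ℂ := fun j =>
    a j * Complex.exp ((-(c * (⟪f j, A (f j)⟫_ℂ).re) : ℝ) : ℂ) with hbdef
  have hsummable : ∀ z : ℂ, Summable (fun p : ℕ => z ^ p / (p.factorial : ℂ)) := fun z =>
    NormedSpace.expSeries_div_summable z
  have hexpK : ∀ z : ℂ, Complex.exp z = ∑' p : ℕ, z ^ p / (p.factorial : ℂ) := by
    intro z
    rw [Complex.exp_eq_exp_ℂ, NormedSpace.exp_eq_tsum_div]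
  -- Step 1: rewrite each term
  have hterm : ∀ j k,
      a j * (starRingEnd ℂ) (a k) *
          Complex.exp (-(Complex.I / 2) * ((⟪f j, f k⟫_ℂ).im : ℂ)) *
          (Real.exp (-c * (⟪f j - f k, A (f j - f k)⟫_ℂ).re) : ℂ)
        = b j * (starRingEnd ℂ) (b k) * Complex.exp (K j k) := by
    intro j k
    have hq : (⟪f j - f k, A (f j - f k)⟫_ℂ).re
        = (⟪f j, A (f j)⟫_ℂ).re + (⟪f k, A (f k)⟫_ℂ).re
          - (⟪f j, A (f k)⟫_ℂ).re - ((starRingEnd ℂ) (⟪f j, A (f k)⟫_ℂ)).re := by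
      rw [map_sub, inner_sub_left, inner_sub_right, inner_sub_right,
        selfadj_conj A hA (f k) (f j)]
      simp only [Complex.sub_re]
      ring
    have e1 : ⟪f k, A (f j)⟫_ℂ = (starRingEnd ℂ) ⟪f j, A (f k)⟫_ℂ :=
      (selfadj_conj A hA (f k) (f j)).symm
    have e2 : ⟪f k, f j⟫_ℂ = (starRingEnd ℂ) ⟪f j, f k⟫_ℂ := (inner_conj_symm _ _).symm
    have hconjb : (starRingEnd ℂ) (b k)
        = (starRingEnd ℂ) (a k) * Complex.exp ((-(c * (⟪f k, A (f k)⟫_ℂ).re) : ℝ) : ℂ) := by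
      rw [hbdef]
      simp only [map_mul, ← Complex.exp_conj, Complex.conj_ofReal]
    have hexp : -(Complex.I / 2) * ((⟪f j, f k⟫_ℂ).im : ℂ)
          + ((-c * (⟪f j - f k, A (f j - f k)⟫_ℂ).re : ℝ) : ℂ)
        = ((-(c * (⟪f j, A (f j)⟫_ℂ).re) : ℝ) : ℂ)
          + ((-(c * (⟪f k, A (f k)⟫_ℂ).re) : ℝ) : ℂ) + K j k := by
      rw [hq, hKdef]
      simp only [e1, e2]
      generalize ⟪f j, A (f k)⟫_ℂ = z1
      generalize ⟪f j, f k⟫_ℂ = z2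
      generalize (⟪f j, A (f j)⟫_ℂ).re = tj
      generalize (⟪f k, A (f k)⟫_ℂ).re = tk
      apply Complex.ext <;>
        simp [Complex.add_re, Complex.add_im, Complex.sub_re, Complex.sub_im, Complex.mul_re,
          Complex.mul_im, Complex.ofReal_re, Complex.ofReal_im, Complex.I_re, Complex.I_im,
          Complex.conj_re, Complex.conj_im, Complex.div_re, Complex.div_im, Complex.normSq] <;>
        ring
    rw [Complex.ofReal_exp, mul_assoc (a j * (starRingEnd ℂ) (a k)), ← Complex.exp_add, hexp,
      hconjb, hbdef]
    rw [Complex.exp_add, Complex.exp_add]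
    ring
  calc ∑ j : Fin n, ∑ k : Fin n,
        a j * (starRingEnd ℂ) (a k) *
          Complex.exp (-(Complex.I / 2) * ((⟪f j, f k⟫_ℂ).im : ℂ)) *
          (Real.exp (-c * (⟪f j - f k, A (f j - f k)⟫_ℂ).re) : ℂ)
      = ∑ j, ∑ k, b j * (starRingEnd ℂ) (b k) * Complex.exp (K j k) :=
        Finset.sum_congr rfl fun j _ => Finset.sum_congr rfl fun k _ => hterm j k
    _ = ∑ j, ∑ k, ∑' p : ℕ, b j * (starRingEnd ℂ) (b k) * (K j k ^ p / (p.factorial : ℂ)) := by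
        refine Finset.sum_congr rfl fun j _ => Finset.sum_congr rfl fun k _ => ?_
        rw [hexpK, tsum_mul_left]
    _ = ∑ j, ∑' p : ℕ, ∑ k, b j * (starRingEnd ℂ) (b k) * (K j k ^ p / (p.factorial : ℂ)) :=
        Finset.sum_congr rfl fun j _ =>
          (Summable.tsum_finsetSum (fun k _ => (hsummable (K j k)).mul_left _)).symm
    _ = ∑' p : ℕ, ∑ j, ∑ k, b j * (starRingEnd ℂ) (b k) * (K j k ^ p / (p.factorial : ℂ)) :=
        (Summable.tsum_finsetSum (fun j _ => summable_sum (fun k _ => (hsummable (K j k)).mul_left _))).symm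
    _ ≥ 0 := by
        refine tsum_nonneg fun p => ?_
        have hdiv : ∑ j, ∑ k, b j * (starRingEnd ℂ) (b k) * (K j k ^ p / (p.factorial : ℂ))
            = (∑ j, ∑ k, b j * (starRingEnd ℂ) (b k) * K j k ^ p) * (((p.factorial : ℝ) : ℂ))⁻¹ := by
          have hcast : ((p.factorial : ℝ) : ℂ)⁻¹ = ((p.factorial : ℂ))⁻¹ := by rw [Complex.ofReal_natCast]
          rw [hcast, Finset.sum_mul]
          refine Finset.sum_congr rfl fun j _ => ?_
          rw [Finset.sum_mul]
          refine Finset.sum_congr rfl fun k _ => ?_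
          rw [div_eq_mul_inv]
          ring
        rw [hdiv]
        have hpow : 0 ≤ ∑ j, ∑ k, b j * (starRingEnd ℂ) (b k) * K j k ^ p := by
          have h0 := kernel_pow_form_nonneg A hA hge hc4 f p (fun j => (starRingEnd ℂ) (b j))
          simpa only [hKdef, Complex.conj_conj] using h0
        have hinv : (0:ℂ) ≤ (((p.factorial : ℝ) : ℂ))⁻¹ := by
          rw [← Complex.ofReal_inv]
          exact_mod_cast inv_nonneg.mpr (Nat.cast_nonneg _)
        exact mul_nonneg hpow hinv


end
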